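/- arXiv:2006.10241 — 2 statements merged into one kernel-verified Lean document; each statement's English description precedes it below -/
import Mathlib

section
/- Combining the previous results: the minimum over O ∈ SO(2) and c ∈ ℝ² of Σᵢ wᵢ‖aᵢ − O·bᵢ − c‖² equals Σᵢ wᵢ‖aᵢ−ā‖² + Σᵢ wᵢ‖bᵢ−b̄‖² − 2(d₁ + det(VᵀU)·d₂), where U D Vᵀ is the SVD of the cross-covariance matrix Σᵢ wᵢ(bᵢ−b̄)(aᵢ−ā)ᵀ with singular values d₁ ≥ d₂ ≥ 0. -/
open Matrix Finset

/-- Squared Euclidean norm on ℝ². -/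
def sqnorm2 (v : Fin 2 → ℝ) : ℝ := ∑ j, v j ^ 2

/-- Weighted mean of vectors. -/
def wmean {n : ℕ} (w : Fin n → ℝ) (a : Fin n → Fin 2 → ℝ) : Fin 2 → ℝ := ∑ i, w i • a i

namespace ProcrustesAux

lemma star_eq_transpose (A : Matrix (Fin 2) (Fin 2) ℝ) : star A = Aᵀ := by
  rw [Matrix.star_eq_conjTranspose, Matrix.conjTranspose_eq_transpose_of_trivial]

lemma orth_mul_transpose {A : Matrix (Fin 2) (Fin 2) ℝ}
    (hA : A ∈ Matrix.orthogonalGroup (Fin 2) ℝ) : A * Aᵀ = 1 := by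
  rw [← star_eq_transpose]; exact (Matrix.mem_orthogonalGroup_iff (Fin 2) ℝ).mp hA

lemma orth_transpose_mul {A : Matrix (Fin 2) (Fin 2) ℝ}
    (hA : A ∈ Matrix.orthogonalGroup (Fin 2) ℝ) : Aᵀ * A = 1 := by
  rw [← star_eq_transpose]; exact (Matrix.mem_orthogonalGroup_iff' (Fin 2) ℝ).mp hA

lemma transpose_mem_orth {A : Matrix (Fin 2) (Fin 2) ℝ}
    (hA : A ∈ Matrix.orthogonalGroup (Fin 2) ℝ) :
    Aᵀ ∈ Matrix.orthogonalGroup (Fin 2) ℝ := by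
  rw [Matrix.mem_orthogonalGroup_iff, Matrix.transpose_transpose]
  exact orth_transpose_mul hA

lemma det_sq_one {A : Matrix (Fin 2) (Fin 2) ℝ}
    (hA : A ∈ Matrix.orthogonalGroup (Fin 2) ℝ) : A.det * A.det = 1 := by
  have h := congrArg Matrix.det (orth_mul_transpose hA)
  rwa [Matrix.det_mul, Matrix.det_transpose, Matrix.det_one] at h

lemma sqnorm2_nonneg (v : Fin 2 → ℝ) : 0 ≤ sqnorm2 v := by
  have : (0:ℝ) ≤ v 0 ^ 2 + v 1 ^ 2 := by positivity
  simpa [sqnorm2, Fin.sum_univ_two] using this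

lemma sqnorm2_add (x y : Fin 2 → ℝ) :
    sqnorm2 (x + y) = sqnorm2 x + 2 * (x ⬝ᵥ y) + sqnorm2 y := by
  simp only [sqnorm2, dotProduct, Fin.sum_univ_two, Pi.add_apply]
  ring

lemma sqnorm2_sub (x y : Fin 2 → ℝ) :
    sqnorm2 (x - y) = sqnorm2 x - 2 * (x ⬝ᵥ y) + sqnorm2 y := by
  simp only [sqnorm2, dotProduct, Fin.sum_univ_two, Pi.sub_apply]
  ring

lemma sum_dot {m : ℕ} (f : Fin m → Fin 2 → ℝ) (y : Fin 2 → ℝ) :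
    ∑ i, f i ⬝ᵥ y = (∑ i, f i) ⬝ᵥ y := by
  simp only [dotProduct, Finset.sum_apply, Finset.sum_mul]
  rw [Finset.sum_comm]

lemma sqnorm2_mulVec {O : Matrix (Fin 2) (Fin 2) ℝ}
    (hO : O ∈ Matrix.orthogonalGroup (Fin 2) ℝ) (v : Fin 2 → ℝ) :
    sqnorm2 (O.mulVec v) = sqnorm2 v := by
  have h := orth_transpose_mul hO
  have e00 : O 0 0 * O 0 0 + O 1 0 * O 1 0 = 1 := by
    have := congrFun (congrFun h 0) 0
    simpa [Matrix.mul_apply, Fin.sum_univ_two, Matrix.transpose_apply] using this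
  have e01 : O 0 0 * O 0 1 + O 1 0 * O 1 1 = 0 := by
    have := congrFun (congrFun h 0) 1
    simpa [Matrix.mul_apply, Fin.sum_univ_two, Matrix.transpose_apply] using this
  have e11 : O 0 1 * O 0 1 + O 1 1 * O 1 1 = 1 := by
    have := congrFun (congrFun h 1) 1
    simpa [Matrix.mul_apply, Fin.sum_univ_two, Matrix.transpose_apply] using this
  simp only [sqnorm2, Matrix.mulVec, dotProduct, Fin.sum_univ_two]
  linear_combination (v 0 ^ 2) * e00 + (2 * v 0 * v 1) * e01 + (v 1 ^ 2) * e11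

lemma dot_mulVec_eq_trace (O : Matrix (Fin 2) (Fin 2) ℝ) (u v : Fin 2 → ℝ) :
    v ⬝ᵥ O.mulVec u = (O * Matrix.vecMulVec u v).trace := by
  simp only [dotProduct, Matrix.mulVec, Matrix.trace, Matrix.diag, Matrix.mul_apply,
    Matrix.vecMulVec_apply, Fin.sum_univ_two]
  ring

lemma trace_mul_diag (R : Matrix (Fin 2) (Fin 2) ℝ) (d1 d2 : ℝ) :
    (R * Matrix.diagonal ![d1, d2]).trace = R 0 0 * d1 + R 1 1 * d2 := by
  simp [Matrix.trace, Matrix.diag, Matrix.mul_apply, Matrix.diagonal, Fin.sum_univ_two]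

lemma trace_bound {R : Matrix (Fin 2) (Fin 2) ℝ}
    (hR : R ∈ Matrix.orthogonalGroup (Fin 2) ℝ) {ε d1 d2 : ℝ}
    (hdet : R.det = ε) (hε : ε = 1 ∨ ε = -1) (h12 : d2 ≤ d1) (h2 : 0 ≤ d2) :
    (R * Matrix.diagonal ![d1, d2]).trace ≤ d1 + ε * d2 := by
  have h := orth_mul_transpose hR
  have r0 : R 0 0 * R 0 0 + R 0 1 * R 0 1 = 1 := by
    have := congrFun (congrFun h 0) 0
    simpa [Matrix.mul_apply, Fin.sum_univ_two, Matrix.transpose_apply] using this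
  have r1 : R 1 0 * R 1 0 + R 1 1 * R 1 1 = 1 := by
    have := congrFun (congrFun h 1) 1
    simpa [Matrix.mul_apply, Fin.sum_univ_two, Matrix.transpose_apply] using this
  have hd : R 0 0 * R 1 1 - R 0 1 * R 1 0 = ε := by
    rw [← hdet, Matrix.det_fin_two]
  rw [trace_mul_diag]
  have h1 : 0 ≤ d1 := le_trans h2 h12
  rcases hε with hε | hε
  · subst hε
    nlinarith [sq_nonneg (R 0 1), sq_nonneg (R 1 0), sq_nonneg (R 0 0 - 1), sq_nonneg (R 1 1 - 1)]
  · subst hε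
    have key : R 1 1 = -R 0 0 := by
      nlinarith [sq_nonneg (R 0 0 + R 1 1), sq_nonneg (R 0 1 - R 1 0)]
    rw [key]
    nlinarith [sq_nonneg (R 0 0 - 1), sq_nonneg (R 0 1)]

end ProcrustesAux

open ProcrustesAux in
/-- the minimum over `O ∈ SO(2)` and `c ∈ ℝ²` of `∑ᵢ wᵢ‖aᵢ − O·bᵢ − c‖²` equals
`∑ᵢ wᵢ‖aᵢ−ā‖² + ∑ᵢ wᵢ‖bᵢ−b̄‖² − 2(d₁ + det(VᵀU)·d₂)`, where `U diag(d₁,d₂) Vᵀ` is the SVD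
of the cross-covariance matrix `∑ᵢ wᵢ(bᵢ−b̄)(aᵢ−ā)ᵀ`, `d₁ ≥ d₂ ≥ 0`. -/
theorem procrustes_distance_computation {n : ℕ} (hn : 1 ≤ n)
    (a b : Fin n → Fin 2 → ℝ) (w : Fin n → ℝ)
    (hw : ∀ i, 0 ≤ w i) (hsum : ∑ i, w i = 1)
    (U V : Matrix (Fin 2) (Fin 2) ℝ) (d1 d2 : ℝ)
    (hU : U ∈ Matrix.orthogonalGroup (Fin 2) ℝ) (hV : V ∈ Matrix.orthogonalGroup (Fin 2) ℝ)
    (h12 : d2 ≤ d1) (h2 : 0 ≤ d2)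
    (hSVD : ∑ i, w i • Matrix.vecMulVec (b i - wmean w b) (a i - wmean w a)
      = U * Matrix.diagonal ![d1, d2] * Vᵀ) :
    IsLeast {x : ℝ | ∃ O ∈ Matrix.specialOrthogonalGroup (Fin 2) ℝ, ∃ c : Fin 2 → ℝ,
        x = ∑ i, w i * sqnorm2 (a i - O.mulVec (b i) - c)}
      (∑ i, w i * sqnorm2 (a i - wmean w a) + ∑ i, w i * sqnorm2 (b i - wmean w b)
        - 2 * (d1 + (Vᵀ * U).det * d2)) := by
  set abar := wmean w a with habar
  set bbar := wmean w b with hbbar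
  set D : Matrix (Fin 2) (Fin 2) ℝ := Matrix.diagonal ![d1, d2] with hD
  set ε : ℝ := (Vᵀ * U).det with hε
  have hεeq : ε = V.det * U.det := by
    rw [hε, Matrix.det_mul, Matrix.det_transpose]
  have hε2 : ε * ε = 1 := by
    rw [hεeq]
    linear_combination (V.det * V.det) * det_sq_one hU + det_sq_one hV
  have hεcases : ε = 1 ∨ ε = -1 := mul_self_eq_one_iff.mp hε2
  have hzero : ∀ O : Matrix (Fin 2) (Fin 2) ℝ,
      ∑ i, w i • ((a i - abar) - O.mulVec (b i - bbar)) = 0 := by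
    intro O
    have ha0 : ∑ i, w i • (a i - abar) = 0 := by
      rw [Finset.sum_congr rfl (fun i _ => smul_sub (w i) (a i) abar),
        Finset.sum_sub_distrib, ← Finset.sum_smul, hsum, one_smul]
      simp [habar, wmean]
    have hb0 : ∑ i, w i • (b i - bbar) = 0 := by
      rw [Finset.sum_congr rfl (fun i _ => smul_sub (w i) (b i) bbar),
        Finset.sum_sub_distrib, ← Finset.sum_smul, hsum, one_smul]
      simp [hbbar, wmean]
    calc ∑ i, w i • ((a i - abar) - O.mulVec (b i - bbar))
        = ∑ i, (w i • (a i - abar) - O.mulVec (w i • (b i - bbar))) := by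
          refine Finset.sum_congr rfl fun i _ => ?_
          rw [smul_sub, Matrix.mulVec_smul]
      _ = (∑ i, w i • (a i - abar)) - O.mulVec (∑ i, w i • (b i - bbar)) := by
          rw [Finset.sum_sub_distrib]
          congr 1
          exact (map_sum (Matrix.mulVecLin O) _ _).symm
      _ = 0 := by rw [ha0, hb0, Matrix.mulVec_zero, sub_zero]
  -- master identity
  have master : ∀ O ∈ Matrix.orthogonalGroup (Fin 2) ℝ, ∀ c : Fin 2 → ℝ,
      ∑ i, w i * sqnorm2 (a i - O.mulVec (b i) - c)
      = ∑ i, w i * sqnorm2 (a i - abar) + ∑ i, w i * sqnorm2 (b i - bbar)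
        - 2 * (O * (U * D * Vᵀ)).trace + sqnorm2 (abar - O.mulVec bbar - c) := by
    intro O hO c
    set y : Fin 2 → ℝ := abar - O.mulVec bbar - c with hy
    have hdecomp : ∀ i, a i - O.mulVec (b i) - c
        = ((a i - abar) - O.mulVec (b i - bbar)) + y := by
      intro i
      funext j
      simp only [Pi.add_apply, Pi.sub_apply, hy, Matrix.mulVec_sub]
      ring
    have step1 : ∀ i, w i * sqnorm2 (a i - O.mulVec (b i) - c)
        = w i * sqnorm2 ((a i - abar) - O.mulVec (b i - bbar))
          + 2 * ((w i • ((a i - abar) - O.mulVec (b i - bbar))) ⬝ᵥ y)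
          + w i * sqnorm2 y := by
      intro i
      rw [hdecomp i, sqnorm2_add, smul_dotProduct, smul_eq_mul]
      ring
    rw [Finset.sum_congr rfl fun i _ => step1 i, Finset.sum_add_distrib,
      Finset.sum_add_distrib, ← Finset.mul_sum, sum_dot, hzero O, zero_dotProduct,
      mul_zero, add_zero, ← Finset.sum_mul, hsum, one_mul]
    have step2 : ∀ i, w i * sqnorm2 ((a i - abar) - O.mulVec (b i - bbar))
        = w i * sqnorm2 (a i - abar) + w i * sqnorm2 (b i - bbar)
          - 2 * (w i * ((O * Matrix.vecMulVec (b i - bbar) (a i - abar)).trace)) := by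
      intro i
      rw [sqnorm2_sub, sqnorm2_mulVec hO, dot_mulVec_eq_trace]
      ring
    rw [Finset.sum_congr rfl fun i _ => step2 i]
    have htr : ∑ i, w i * (O * Matrix.vecMulVec (b i - bbar) (a i - abar)).trace
        = (O * (U * D * Vᵀ)).trace := by
      rw [← hSVD, Matrix.mul_sum, Matrix.trace_sum]
      refine Finset.sum_congr rfl fun i _ => ?_
      rw [Matrix.mul_smul, Matrix.trace_smul, smul_eq_mul]
    rw [Finset.sum_sub_distrib, Finset.sum_add_distrib, ← Finset.mul_sum, htr]
  -- trace rewrite: trace (O * (U * D * Vᵀ)) = trace ((Vᵀ * O * U) * D)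
  have htrace : ∀ O : Matrix (Fin 2) (Fin 2) ℝ,
      (O * (U * D * Vᵀ)).trace = ((Vᵀ * O * U) * D).trace := by
    intro O
    rw [show O * (U * D * Vᵀ) = (O * U * D) * Vᵀ from by noncomm_ring,
      Matrix.trace_mul_comm]
    exact congrArg Matrix.trace (by noncomm_ring)
  constructor
  · -- membership: witness O' = V * diag(1, ε) * Uᵀ
    set E : Matrix (Fin 2) (Fin 2) ℝ := Matrix.diagonal ![1, ε] with hE
    have hEorth : E ∈ Matrix.orthogonalGroup (Fin 2) ℝ := by
      rw [Matrix.mem_orthogonalGroup_iff, hE, Matrix.diagonal_transpose,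
        Matrix.diagonal_mul_diagonal]
      convert Matrix.diagonal_one using 2
      funext j
      fin_cases j <;> simp [hε2]
    set O' : Matrix (Fin 2) (Fin 2) ℝ := V * E * Uᵀ with hO'
    have hO'orth : O' ∈ Matrix.orthogonalGroup (Fin 2) ℝ :=
      mul_mem (mul_mem hV hEorth) (transpose_mem_orth hU)
    have hO'so : O' ∈ Matrix.specialOrthogonalGroup (Fin 2) ℝ := by
      rw [Matrix.mem_specialOrthogonalGroup_iff]
      refine ⟨hO'orth, ?_⟩
      rw [hO', Matrix.det_mul, Matrix.det_mul, Matrix.det_transpose, hE,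
        Matrix.det_diagonal, Fin.prod_univ_two]
      simp only [Matrix.cons_val_zero, Matrix.cons_val_one, Matrix.head_cons]
      linear_combination hε2 - ε * hεeq
    refine ⟨O', hO'so, abar - O'.mulVec bbar, ?_⟩
    have htrval : (O' * (U * D * Vᵀ)).trace = d1 + ε * d2 := by
      rw [htrace O']
      have hVOU : Vᵀ * O' * U = E := by
        rw [hO', show Vᵀ * (V * E * Uᵀ) * U = (Vᵀ * V) * E * (Uᵀ * U) from by noncomm_ring,
          orth_transpose_mul hV, orth_transpose_mul hU, one_mul, mul_one]
      rw [hVOU, trace_mul_diag, hE]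
      simp [Matrix.diagonal]
    rw [master O' hO'orth _, htrval,
      show abar - O'.mulVec bbar - (abar - O'.mulVec bbar) = 0 from sub_self _,
      show sqnorm2 (0 : Fin 2 → ℝ) = 0 from by simp [sqnorm2]]
    ring
  · -- lower bound
    rintro x ⟨O, hOso, c, rfl⟩
    rw [Matrix.mem_specialOrthogonalGroup_iff] at hOso
    obtain ⟨hOorth, hOdet⟩ := hOso
    have hRorth : Vᵀ * O * U ∈ Matrix.orthogonalGroup (Fin 2) ℝ :=
      mul_mem (mul_mem (transpose_mem_orth hV) hOorth) hU
    have hRdet : (Vᵀ * O * U).det = ε := by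
      rw [Matrix.det_mul, Matrix.det_mul, hOdet, mul_one, ← Matrix.det_mul]
    have hbd : ((Vᵀ * O * U) * D).trace ≤ d1 + ε * d2 :=
      trace_bound hRorth hRdet hεcases h12 h2
    rw [master O hOorth c, htrace O]
    have hynn := sqnorm2_nonneg (abar - O.mulVec bbar - c)
    linarith
end

section
/- For the second-order Wasserstein distance W₂ on probability measures over a metric space (X,d), and the empirical measure Pₙ = (1/n)Σᵢ δ_{xᵢ}, the minimization of W₂(P, Pₙ)² over discrete measures P supported on at most k points is equal to the k-means objective: min over sets S ⊆ X with |S| ≤ k of (1/n) Σᵢ min_{s ∈ S} d(xᵢ, s)². -/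
open MeasureTheory ENNReal

/-- The squared second-order Wasserstein distance between two measures on a metric space,
defined as the infimum over couplings of the integral of the squared distance. -/
noncomputable def W2sq {X : Type*} [MetricSpace X] [MeasurableSpace X]
    (P Q : Measure X) : ℝ :=
  sInf {r : ℝ | ∃ π : Measure (X × X), IsProbabilityMeasure π ∧
    π.map Prod.fst = P ∧ π.map Prod.snd = Q ∧ r = ∫ p, dist p.1 p.2 ^ 2 ∂π}

namespace WKAux

lemma map_finset_sum {α β ι : Type*} [MeasurableSpace α] [MeasurableSpace β] {φ : α → β}
    (hφ : Measurable φ) (μ : ι → Measure α) (s : Finset ι) :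
    Measure.map φ (∑ i ∈ s, μ i) = ∑ i ∈ s, Measure.map φ (μ i) := by
  classical
  induction s using Finset.cons_induction with
  | empty => simp
  | cons a s ha ih =>
    rw [Finset.sum_cons, Finset.sum_cons, Measure.map_add _ _ hφ, ih]

lemma integrable_dirac' {α : Type*} [MeasurableSpace α] [MeasurableSingletonClass α]
    (f : α → ℝ) (a : α) : Integrable f (Measure.dirac a) := by
  have h : f =ᵐ[Measure.dirac a] fun _ => f a := by
    rw [MeasureTheory.ae_dirac_eq]
    exact Filter.eventually_pure.2 rfl
  exact (integrable_const (f a)).congr h.symm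

lemma integral_smul_sum_dirac {α : Type*} [MeasurableSpace α] [MeasurableSingletonClass α]
    {n : ℕ} (a : Fin n → α) (f : α → ℝ) :
    ∫ y, f y ∂((n : ℝ≥0∞)⁻¹ • ∑ i : Fin n, Measure.dirac (a i))
      = (1 / (n : ℝ)) * ∑ i : Fin n, f (a i) := by
  rw [integral_smul_measure, integral_finset_sum_measure (fun i _ => integrable_dirac' f (a i))]
  simp [integral_dirac, ENNReal.toReal_inv, smul_eq_mul, one_div]

lemma isProb_emp {α : Type*} [MeasurableSpace α] {n : ℕ} (hn : 0 < n) (a : Fin n → α) :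
    IsProbabilityMeasure ((n : ℝ≥0∞)⁻¹ • ∑ i : Fin n, Measure.dirac (a i)) := by
  constructor
  rw [Measure.smul_apply, Measure.finset_sum_apply]
  simp only [measure_univ]
  rw [Finset.sum_const, Finset.card_univ, Fintype.card_fin, nsmul_eq_mul, mul_one, smul_eq_mul]
  exact ENNReal.inv_mul_cancel (by exact_mod_cast hn.ne') (by simp)

lemma W2sq_nonneg {X : Type*} [MetricSpace X] [MeasurableSpace X] (P Q : Measure X) :
    0 ≤ W2sq P Q := by
  apply Real.sInf_nonneg
  rintro r ⟨π, hπ, h1, h2, rfl⟩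
  exact integral_nonneg fun p => by positivity

lemma W2sq_bddBelow {X : Type*} [MetricSpace X] [MeasurableSpace X] (P Q : Measure X) :
    BddBelow {r : ℝ | ∃ π : Measure (X × X), IsProbabilityMeasure π ∧
      π.map Prod.fst = P ∧ π.map Prod.snd = Q ∧ r = ∫ p, dist p.1 p.2 ^ 2 ∂π} := by
  refine ⟨0, ?_⟩
  rintro r ⟨π, hπ, h1, h2, rfl⟩
  exact integral_nonneg fun p => by positivity

lemma upper {X : Type*} [MetricSpace X] [MeasurableSpace X] [BorelSpace X]
    {n : ℕ} (hn : 0 < n) (x : Fin n → X) (S : Finset X) (hS : S.Nonempty) :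
    ∃ P : Measure X, IsProbabilityMeasure P ∧ P ((↑S : Set X)ᶜ) = 0 ∧
      W2sq P ((n : ℝ≥0∞)⁻¹ • ∑ i : Fin n, Measure.dirac (x i))
        ≤ (1 / (n : ℝ)) * ∑ i : Fin n, sInf ((fun s => dist (x i) s ^ 2) '' (↑S : Set X)) := by
  classical
  have H : ∀ i : Fin n, ∃ s ∈ S, ∀ s' ∈ S, dist (x i) s ^ 2 ≤ dist (x i) s' ^ 2 :=
    fun i => S.exists_min_image _ hS
  choose σ hσS hσmin using H
  refine ⟨(n : ℝ≥0∞)⁻¹ • ∑ i : Fin n, Measure.dirac (σ i), isProb_emp hn σ, ?_, ?_⟩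
  · rw [Measure.smul_apply, Measure.finset_sum_apply]
    have : ∀ i : Fin n, Measure.dirac (σ i) ((↑S : Set X)ᶜ) = 0 := by
      intro i
      rw [Measure.dirac_apply' _ (S.finite_toSet.measurableSet.compl)]
      simp [hσS i]
    simp [this]
  · -- the coupling
    set π : Measure (X × X) :=
      (n : ℝ≥0∞)⁻¹ • ∑ i : Fin n, Measure.dirac (σ i, x i) with hπdef
    have hπprob : IsProbabilityMeasure π := isProb_emp hn fun i => (σ i, x i)
    have hfst : π.map Prod.fst = (n : ℝ≥0∞)⁻¹ • ∑ i : Fin n, Measure.dirac (σ i) := by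
      rw [hπdef, Measure.map_smul, map_finset_sum measurable_fst]
      simp [Measure.map_dirac' measurable_fst]
    have hsnd : π.map Prod.snd = (n : ℝ≥0∞)⁻¹ • ∑ i : Fin n, Measure.dirac (x i) := by
      rw [hπdef, Measure.map_smul, map_finset_sum measurable_snd]
      simp [Measure.map_dirac' measurable_snd]
    have hval : (∫ p : X × X, dist p.1 p.2 ^ 2 ∂π)
        = (1 / (n : ℝ)) * ∑ i : Fin n, dist (σ i) (x i) ^ 2 := by
      rw [hπdef]
      exact integral_smul_sum_dirac (fun i => (σ i, x i)) (fun p => dist p.1 p.2 ^ 2)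
    have hmem : (∫ p : X × X, dist p.1 p.2 ^ 2 ∂π) ∈
        {r : ℝ | ∃ π' : Measure (X × X), IsProbabilityMeasure π' ∧
          π'.map Prod.fst = (n : ℝ≥0∞)⁻¹ • ∑ i : Fin n, Measure.dirac (σ i) ∧
          π'.map Prod.snd = (n : ℝ≥0∞)⁻¹ • ∑ i : Fin n, Measure.dirac (x i) ∧
          r = ∫ p, dist p.1 p.2 ^ 2 ∂π'} := ⟨π, hπprob, hfst, hsnd, rfl⟩
    refine le_trans (csInf_le (W2sq_bddBelow _ _) hmem) ?_
    rw [hval]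
    apply mul_le_mul_of_nonneg_left _ (by positivity)
    apply Finset.sum_le_sum
    intro i _
    apply le_csInf (⟨_, Set.mem_image_of_mem _ (hσS i)⟩)
    rintro b ⟨s', hs', rfl⟩
    rw [dist_comm]
    exact hσmin i s' hs'

lemma lower {X : Type*} [MetricSpace X] [MeasurableSpace X] [BorelSpace X]
    {n : ℕ} (hn : 0 < n) (x : Fin n → X) (S : Finset X) (hS : S.Nonempty)
    (P : Measure X) (hP : IsProbabilityMeasure P) (hsupp : P ((↑S : Set X)ᶜ) = 0) :
    (1 / (n : ℝ)) * ∑ i : Fin n, sInf ((fun s => dist (x i) s ^ 2) '' (↑S : Set X))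
      ≤ W2sq P ((n : ℝ≥0∞)⁻¹ • ∑ i : Fin n, Measure.dirac (x i)) := by
  classical
  set Pn : Measure X := (n : ℝ≥0∞)⁻¹ • ∑ i : Fin n, Measure.dirac (x i) with hPndef
  have hPnprob : IsProbabilityMeasure Pn := isProb_emp hn x
  set T : Finset X := Finset.image x Finset.univ with hTdef
  have hxT : ∀ i : Fin n, x i ∈ T := fun i => Finset.mem_image_of_mem x (Finset.mem_univ i)
  -- the k-means assignment cost function
  set g : X → ℝ := fun y => sInf ((fun s => dist y s ^ 2) '' (↑S : Set X)) with hgdef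
  have hg_nonneg : ∀ y, 0 ≤ g y := by
    intro y
    apply Real.sInf_nonneg
    rintro r ⟨s, hs, rfl⟩
    positivity
  have hg_le : ∀ y, ∀ s ∈ S, g y ≤ dist y s ^ 2 := by
    intro y s hs
    apply csInf_le ⟨0, ?_⟩ (Set.mem_image_of_mem _ hs)
    rintro r ⟨s', hs', rfl⟩
    positivity
  -- h : indicator version of g on T
  set h : X → ℝ := fun y => ∑ t ∈ T, Set.indicator ({t} : Set X) (fun _ => g t) y with hhdef
  have hh_eq : ∀ y ∈ T, h y = g y := by
    intro y hy
    show (∑ t ∈ T, Set.indicator ({t} : Set X) (fun _ => g t) y) = g y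
    rw [Finset.sum_eq_single_of_mem y hy]
    · simp [Set.indicator_of_mem]
    · intro t ht hne
      apply Set.indicator_of_notMem
      simp [Ne.symm hne]
  have hh_meas : Measurable h := by
    apply Finset.measurable_sum
    intro t _
    exact measurable_const.indicator (measurableSet_singleton t)
  -- simple function version of the cost on S ×ˢ T
  set f' : X × X → ℝ := fun q =>
    ∑ p ∈ S ×ˢ T, Set.indicator ({p} : Set (X × X)) (fun _ => dist p.1 p.2 ^ 2) q with hf'def
  have hf'_eq : ∀ q : X × X, q.1 ∈ S → q.2 ∈ T → f' q = dist q.1 q.2 ^ 2 := by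
    intro q h1 h2
    show (∑ p ∈ S ×ˢ T, Set.indicator ({p} : Set (X × X)) (fun _ => dist p.1 p.2 ^ 2) q) = dist q.1 q.2 ^ 2
    rw [Finset.sum_eq_single_of_mem (q.1, q.2) (Finset.mem_product.2 ⟨h1, h2⟩)]
    · simp [Set.indicator_of_mem]
    · intro p hp hne
      apply Set.indicator_of_notMem
      simp only [Set.mem_singleton_iff]
      intro hq
      exact hne (by rw [← hq])
  -- now bound the infimum over couplings
  rw [W2sq]
  apply le_csInf
  · -- nonempty: product coupling
    exact ⟨_, P.prod Pn, inferInstance, by simp, by simp, rfl⟩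
  rintro r ⟨π, hπ, hfst, hsnd, rfl⟩
  have hSmeas : MeasurableSet (↑S : Set X) := S.finite_toSet.measurableSet
  have hTmeas : MeasurableSet (↑T : Set X) := T.finite_toSet.measurableSet
  -- a.e. the coupling lives on S × T
  have h1 : π (Prod.fst ⁻¹' (↑S : Set X)ᶜ) = 0 := by
    rw [← Measure.map_apply measurable_fst hSmeas.compl, hfst]
    exact hsupp
  have h2 : π (Prod.snd ⁻¹' (↑T : Set X)ᶜ) = 0 := by
    rw [← Measure.map_apply measurable_snd hTmeas.compl, hsnd]
    rw [hPndef, Measure.smul_apply, Measure.finset_sum_apply]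
    have : ∀ i : Fin n, Measure.dirac (x i) ((↑T : Set X)ᶜ) = 0 := by
      intro i
      rw [Measure.dirac_apply' _ hTmeas.compl]
      simp [hxT i]
    simp [this]
  have hae1 : ∀ᵐ q : X × X ∂π, q.1 ∈ S := by
    rw [ae_iff]
    convert h1 using 2
    rfl
  have hae2 : ∀ᵐ q : X × X ∂π, q.2 ∈ T := by
    rw [ae_iff]
    convert h2 using 2
    rfl
  have hae := hae1.and hae2
  -- step 1: replace cost by simple function
  have key1 : (∫ p : X × X, dist p.1 p.2 ^ 2 ∂π) = ∫ q, f' q ∂π := by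
    apply integral_congr_ae
    filter_upwards [hae] with q hq
    exact (hf'_eq q hq.1 hq.2).symm
  -- step 2: simple function dominates h ∘ snd a.e.
  have hint_f' : Integrable f' π := by
    apply integrable_finset_sum
    intro p _
    exact (integrable_const _).indicator (measurableSet_singleton p)
  have hint_h : Integrable (fun q : X × X => h q.2) π := by
    have heq : (fun q : X × X => h q.2)
        = fun q => ∑ t ∈ T, Set.indicator (Prod.snd ⁻¹' ({t} : Set X)) (fun _ => g t) q := by
      funext q
      simp [hhdef, Set.indicator]
    rw [heq]
    apply integrable_finset_sum
    intro t _
    exact (integrable_const _).indicator (measurable_snd (measurableSet_singleton t))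
  -- step 2 inequality
  have key2 : (∫ q : X × X, h q.2 ∂π) ≤ ∫ q, f' q ∂π := by
    apply integral_mono_ae hint_h hint_f'
    filter_upwards [hae] with q hq
    rw [hf'_eq q hq.1 hq.2, hh_eq q.2 hq.2]
    rw [dist_comm]
    exact hg_le q.2 q.1 hq.1
  -- step 3: compute ∫ h ∘ snd via the second marginal
  have key3 : (∫ q : X × X, h q.2 ∂π)
      = (1 / (n : ℝ)) * ∑ i : Fin n, g (x i) := by
    have : (∫ q : X × X, h q.2 ∂π) = ∫ y, h y ∂Pn := by
      rw [← hsnd]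
      exact (integral_map measurable_snd.aemeasurable
        hh_meas.stronglyMeasurable.aestronglyMeasurable).symm
    rw [this, hPndef, integral_smul_sum_dirac]
    congr 1
    exact Finset.sum_congr rfl fun i _ => hh_eq (x i) (hxT i)
  calc (1 / (n : ℝ)) * ∑ i : Fin n, sInf ((fun s => dist (x i) s ^ 2) '' (↑S : Set X))
      = ∫ q : X × X, h q.2 ∂π := key3.symm
    _ ≤ ∫ q, f' q ∂π := key2
    _ = ∫ p : X × X, dist p.1 p.2 ^ 2 ∂π := key1.symm


end WKAux

/-- the minimization of `W₂(P, Pₙ)²` over probability measures `P` supported on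
at most `k` points equals the k-means objective
`min_{S ⊆ X, |S| ≤ k} (1/n) ∑ᵢ min_{s ∈ S} d(xᵢ, s)²`. -/
theorem wasserstein_kmeans_equivalence {X : Type*} [MetricSpace X] [MeasurableSpace X]
    [BorelSpace X] {n k : ℕ} (hn : 0 < n) (hk : 1 ≤ k) (x : Fin n → X) :
    sInf {r : ℝ | ∃ P : Measure X, IsProbabilityMeasure P ∧
        (∃ S : Finset X, S.card ≤ k ∧ P ((↑S : Set X)ᶜ) = 0) ∧
        r = W2sq P ((n : ℝ≥0∞)⁻¹ • ∑ i : Fin n, Measure.dirac (x i))}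
      = sInf {r : ℝ | ∃ S : Finset X, S.Nonempty ∧ S.card ≤ k ∧
        r = (1 / (n : ℝ)) * ∑ i : Fin n, sInf ((fun s => dist (x i) s ^ 2) '' (↑S : Set X))} := by
  classical
  set A := {r : ℝ | ∃ P : Measure X, IsProbabilityMeasure P ∧
      (∃ S : Finset X, S.card ≤ k ∧ P ((↑S : Set X)ᶜ) = 0) ∧
      r = W2sq P ((n : ℝ≥0∞)⁻¹ • ∑ i : Fin n, Measure.dirac (x i))} with hA
  set B := {r : ℝ | ∃ S : Finset X, S.Nonempty ∧ S.card ≤ k ∧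
      r = (1 / (n : ℝ)) * ∑ i : Fin n, sInf ((fun s => dist (x i) s ^ 2) '' (↑S : Set X))} with hB
  have hBddA : BddBelow A := by
    refine ⟨0, ?_⟩
    rintro a ⟨P, hP, _, rfl⟩
    exact WKAux.W2sq_nonneg _ _
  have hBddB : BddBelow B := by
    refine ⟨0, ?_⟩
    rintro b ⟨S, hSne, hScard, rfl⟩
    have : ∀ i : Fin n, 0 ≤ sInf ((fun s => dist (x i) s ^ 2) '' (↑S : Set X)) := by
      intro i
      apply Real.sInf_nonneg
      rintro r ⟨s, hs, rfl⟩
      positivity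
    have h1 : (0:ℝ) ≤ ∑ i : Fin n, sInf ((fun s => dist (x i) s ^ 2) '' (↑S : Set X)) :=
      Finset.sum_nonneg fun i _ => this i
    positivity
  -- reference finset
  set S₀ : Finset X := {x ⟨0, hn⟩} with hS₀
  have hS₀ne : S₀.Nonempty := ⟨x ⟨0, hn⟩, Finset.mem_singleton_self _⟩
  have hS₀card : S₀.card ≤ k := by simp [hS₀, hk]
  obtain ⟨P₀, hP₀prob, hP₀supp, hP₀le⟩ := WKAux.upper hn x S₀ hS₀ne
  have hAne : A.Nonempty := ⟨_, P₀, hP₀prob, ⟨S₀, hS₀card, hP₀supp⟩, rfl⟩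
  have hBne : B.Nonempty := ⟨_, S₀, hS₀ne, hS₀card, rfl⟩
  apply le_antisymm
  · apply le_csInf hBne
    rintro b ⟨S, hSne, hScard, rfl⟩
    obtain ⟨P, hPprob, hPsupp, hPle⟩ := WKAux.upper hn x S hSne
    exact le_trans (csInf_le hBddA ⟨P, hPprob, ⟨S, hScard, hPsupp⟩, rfl⟩) hPle
  · apply le_csInf hAne
    rintro a ⟨P, hPprob, ⟨S, hScard, hPsupp⟩, rfl⟩
    have hSne : S.Nonempty := by
      rcases S.eq_empty_or_nonempty with h | h
      · exfalso
        rw [h] at hPsupp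
        simp at hPsupp
      · exact h
    exact le_trans (csInf_le hBddB ⟨S, hSne, hScard, rfl⟩)
      (WKAux.lower hn x S hSne P hPprob hPsupp)
end
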